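/- Suppose the OSC holds with open sets (U_v)_{v∈V}, and fix paths (l_v)_{v∈V} of common length l with S_{l_v}(F_{t(l_v)}) ⊆ U_v and constants c_v = dist(S_{l_v}(F_{t(l_v)}), ℝ^m ∖ U_v) > 0. Let e = e₁⋯e_k and g = g₁⋯g_j be finite paths in E_u^* whose first edges differ (e₁ ≠ g₁), and suppose dist(S_e(F_{t(e)}), S_g(F_{t(g)})) ≤ c_w · r_g for some vertex w ∈ V. Then l_w is not a subpath of g₂⋯g_j. -/

import Mathlib

open MeasureTheory Metric Set Filter Topology Asymptotics

noncomputable section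

/-- Euclidean space `ℝ^m`. -/
abbrev Euc (m : ℕ) : Type := EuclideanSpace ℝ (Fin m)

/-- The topological support of a measure. -/
def mSupport {X : Type} [TopologicalSpace X] [MeasurableSpace X]
    (μ : Measure X) : Set X :=
  {x | ∀ U : Set X, IsOpen U → x ∈ U → 0 < μ U}

/-- The probability weight of a finite path (product of its edge weights). -/
def pathProb {E : Type} (w : E → ℝ) (p : List E) : ℝ := (p.map w).prod

/-- `f` is a subpath of `g`. -/
def IsSubpath {E : Type} (f g : List E) : Prop := ∃ s t : List E, g = s ++ f ++ t

/-- The distance between two sets. -/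
def setDist {X : Type} [PseudoMetricSpace X] (A B : Set X) : ℝ :=
  sInf (Set.image2 dist A B)

/-- The `q`-th packing moment `M_u^q(A,r)` of a measure `μ` on `A` at scale `r`:
the supremum of `∑_{x∈D} μ(B̄(x,r))^q` over `r`-separated finite subsets `D ⊆ A`. -/
def packMoment {m : ℕ} (μ : Measure (Euc m)) (q : ℝ) (A : Set (Euc m)) (r : ℝ) : ℝ :=
  sSup {s : ℝ | ∃ D : Finset (Euc m), ↑D ⊆ A ∧
    (∀ x ∈ D, ∀ y ∈ D, x ≠ y → 2 * r < dist x y) ∧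
    s = ∑ x ∈ D, (μ (Metric.closedBall x r)).toReal ^ q}

/-- The spectral radius of a real square matrix (via its complex spectrum). -/
def specRad {n : Type} [Fintype n] [DecidableEq n] (M : Matrix n n ℝ) : ENNReal :=
  spectralRadius ℂ (M.map (algebraMap ℝ ℂ))

/-- A matrix is irreducible if some power has a positive `ij` entry, for every `i j`. -/
def MatIrreducible {n : Type} [Fintype n] [DecidableEq n] (M : Matrix n n ℝ) : Prop :=
  ∀ i j : n, ∃ k : ℕ, 0 < (M ^ k) i j

/-- A self-similar directed-graph IFS on `ℝ^m`: a finite strongly connected directed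
multigraph with at least two edges out of each vertex, each edge carrying a contracting
similarity of `ℝ^m`. -/
structure GIFS (m : ℕ) (V E : Type) [Fintype V] [Fintype E] where
  src : E → V
  dst : E → V
  ratio : E → ℝ
  ratio_pos : ∀ e, 0 < ratio e
  ratio_lt_one : ∀ e, ratio e < 1
  map : E → Euc m → Euc m
  map_similarity : ∀ e x y, dist (map e x) (map e y) = ratio e * dist x y
  two_edges : ∀ u : V, ∃ e f : E, e ≠ f ∧ src e = u ∧ src f = u
  strongly_connected : ∀ u v : V, ∃ p : List E, p ≠ [] ∧
    p.Chain' (fun a b => dst a = src b) ∧ p.head?.map src = some u ∧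
    p.getLast?.map dst = some v

namespace GIFS

variable {m : ℕ} {V E : Type} [Fintype V] [Fintype E] (G : GIFS m V E)

/-- `p` is a directed path (consecutive edges match up). -/
def IsPath (p : List E) : Prop := p.Chain' (fun a b => G.dst a = G.src b)

/-- `p` is a nonempty directed path from `u` to `v`. -/
def IsPathFrom (u v : V) (p : List E) : Prop :=
  p ≠ [] ∧ G.IsPath p ∧ p.head?.map G.src = some u ∧ p.getLast?.map G.dst = some v

/-- The contraction `S_{e₁} ∘ ⋯ ∘ S_{e_k}` along a path. -/
def pathMap (p : List E) : Euc m → Euc m := p.foldr (fun e f => G.map e ∘ f) id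

/-- The contraction ratio along a path. -/
def pathRatio (p : List E) : ℝ := (p.map G.ratio).prod

/-- The terminal vertex of a path (with default `u` for the empty path). -/
def pathDst (u : V) (p : List E) : V := (p.getLast?.map G.dst).getD u

/-- `(F u)_{u ∈ V}` is the attractor: the unique list of nonempty compact sets with
`F u = ⋃_{e ∈ E_u¹} S_e(F_{t(e)})`. -/
def IsAttractor (F : V → Set (Euc m)) : Prop :=
  (∀ u, (F u).Nonempty) ∧ (∀ u, IsCompact (F u)) ∧
  (∀ u, F u = ⋃ e ∈ {e : E | G.src e = u}, G.map e '' F (G.dst e))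

/-- Probability weights on the edges: each in `(0,1)`, summing to `1` at each vertex. -/
def IsProbWeights (w : E → ℝ) : Prop :=
  (∀ e, w e ∈ Set.Ioo (0 : ℝ) 1) ∧
  (∀ u : V, ∑ e : E, Set.indicator {e : E | G.src e = u} w e = 1)

/-- `(μ u)_{u ∈ V}` are the self-similar measures: Borel probability measures with
`μ_u(A) = ∑_{e ∈ E_u¹} p_e μ_{t(e)}(S_e⁻¹(A))` and `supp μ_u = F u`. -/
def IsSelfSimilarMeasures (w : E → ℝ) (F : V → Set (Euc m)) (μ : V → Measure (Euc m)) : Prop :=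
  (∀ u, IsProbabilityMeasure (μ u)) ∧
  (∀ u (A : Set (Euc m)), MeasurableSet A →
    μ u A = ∑ e : E, Set.indicator {e : E | G.src e = u}
      (fun e => ENNReal.ofReal (w e) * μ (G.dst e) (G.map e ⁻¹' A)) e) ∧
  (∀ u, mSupport (μ u) = F u)

/-- The strong separation condition. -/
def SSC (F : V → Set (Euc m)) : Prop :=
  ∀ u : V, ∀ e f : E, G.src e = u → G.src f = u → e ≠ f →
    (G.map e '' F (G.dst e)) ∩ (G.map f '' F (G.dst f)) = ∅

/-- The open set condition with open sets `U`. -/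
def OSCWith (U : V → Set (Euc m)) : Prop :=
  (∀ u, (U u).Nonempty ∧ IsOpen (U u) ∧ Bornology.IsBounded (U u)) ∧
  (∀ e : E, G.map e '' U (G.dst e) ⊆ U (G.src e)) ∧
  (∀ u : V, ∀ e f : E, G.src e = u → G.src f = u → e ≠ f →
    (G.map e '' U (G.dst e)) ∩ (G.map f '' U (G.dst f)) = ∅)

/-- The open set condition. -/
def OSC : Prop := ∃ U : V → Set (Euc m), G.OSCWith U

variable [DecidableEq V]

/-- The matrix `A(q,β)` with `uv` entry `∑_{e ∈ E¹_{uv}} p_e^q r_e^β`. -/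
def matA (w : E → ℝ) (q β : ℝ) : Matrix V V ℝ :=
  Matrix.of fun u v => ∑ e : E,
    Set.indicator {e : E | G.src e = u ∧ G.dst e = v}
      (fun e => w e ^ q * G.ratio e ^ β) e

/-- The matrix `B(q,γ,l)` with `uv` entry `∑_{e ∈ E^l_{uv}, e ≠ l_u} p_e^q r_e^γ`. -/
def matB (w : E → ℝ) (q γ : ℝ) (l : ℕ) (lu : V → List E) : Matrix V V ℝ :=
  Matrix.of fun u v => ∑ p : List.Vector E l,
    Set.indicator {p : List.Vector E l | G.IsPathFrom u v p.toList ∧ p.toList ≠ lu u}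
      (fun p => pathProb w p.toList ^ q * G.pathRatio p.toList ^ γ) p

/-- The matrix of measures `P` with `uv` entry `∑_{e ∈ E¹_{uv}} p_e^q r_e^{β} δ_{ln(1/r_e)}`. -/
def matP (w : E → ℝ) (q β : ℝ) : V → V → Measure ℝ :=
  fun u v => ∑ e : E,
    (Set.indicator {e : E | G.src e = u ∧ G.dst e = v}
      (fun e => ENNReal.ofReal (w e ^ q * G.ratio e ^ β)) e) •
      Measure.dirac (Real.log ((G.ratio e)⁻¹))

end GIFS

/-- `P` is a lattice matrix of measures with span `lam`. -/
def IsLatticeMatrix {V : Type} (P : V → V → MeasureTheory.Measure ℝ) (lam : ℝ) : Prop :=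
  0 < lam ∧
  ∃ (L : V → V → ℝ) (b : V → V → ℝ),
    (∀ u v : V, 0 < L u v) ∧
    -- (a) each diagonal support generates the group `L u u • ℤ`
    (∀ u : V, AddSubgroup.closure (mSupport (P u u)) = AddSubgroup.zmultiples (L u u)) ∧
    -- (b) off-diagonal supports lie in `b u v + L u v • ℤ`, with `L u v` maximal
    (∀ u v : V, u ≠ v →
      (mSupport (P u v) ⊆ {x : ℝ | ∃ n : ℤ, x = b u v + n * L u v}) ∧
      (∀ L' : ℝ, 0 < L' →
        (∃ b' : ℝ, mSupport (P u v) ⊆ {x : ℝ | ∃ n : ℤ, x = b' + n * L'}) → L' ≤ L u v)) ∧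
    -- (c) the numbers `L u v` generate the group `lam • ℤ`
    (AddSubgroup.closure {x : ℝ | ∃ u v : V, x = L u v} = AddSubgroup.zmultiples lam) ∧
    -- (d) `supp P_uv + supp P_vw − supp P_uw ⊆ lam • ℤ`
    (∀ u v z : V, ∀ a ∈ mSupport (P u v), ∀ a' ∈ mSupport (P v z), ∀ a'' ∈ mSupport (P u z),
      ∃ n : ℤ, a + a' - a'' = n * lam)


section Aux

open Function

/-- A map satisfying `dist (f x) (f y) = r * dist x y` with `r > 0` is surjective. -/
lemma similarity_surjective {m : ℕ} {f : Euc m → Euc m} {r : ℝ} (hr : 0 < r)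
    (hf : ∀ x y, dist (f x) (f y) = r * dist x y) : Function.Surjective f := by
  have hg : Isometry (fun x => r⁻¹ • f x) := by
    apply Isometry.of_dist_eq
    intro x y
    rw [dist_smul₀, hf, Real.norm_eq_abs, abs_of_pos (inv_pos.mpr hr)]
    field_simp
  intro y
  obtain ⟨x, hx⟩ :=
    (hg.affineIsometryOfStrictConvexSpace.toAffineIsometryEquiv rfl).surjective (r⁻¹ • y)
  refine ⟨x, ?_⟩
  have h1 : r⁻¹ • f x = r⁻¹ • y := by simpa using hx
  have := congrArg (fun z => r • z) h1
  simpa [smul_smul, mul_inv_cancel₀ hr.ne'] using this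

lemma similarity_isOpenImage {m : ℕ} {f : Euc m → Euc m} {r : ℝ} (hr : 0 < r)
    (hf : ∀ x y, dist (f x) (f y) = r * dist x y) {Ω : Set (Euc m)} (hΩ : IsOpen Ω) :
    IsOpen (f '' Ω) := by
  rw [Metric.isOpen_iff] at hΩ ⊢
  rintro _ ⟨x, hx, rfl⟩
  obtain ⟨δ, hδ, hball⟩ := hΩ x hx
  refine ⟨r * δ, by positivity, ?_⟩
  intro q hq
  obtain ⟨p, rfl⟩ := similarity_surjective hr hf q
  refine ⟨p, hball ?_, rfl⟩
  rw [Metric.mem_ball] at hq ⊢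
  rw [hf] at hq
  exact lt_of_mul_lt_mul_left hq hr.le

lemma setDist_le_dist {X : Type} [PseudoMetricSpace X] {A B : Set X} {a b : X}
    (ha : a ∈ A) (hb : b ∈ B) : setDist A B ≤ dist a b := by
  apply csInf_le
  · refine ⟨0, ?_⟩
    rintro d ⟨x, hx, y, hy, rfl⟩
    exact dist_nonneg
  · exact ⟨a, ha, b, hb, rfl⟩

lemma le_setDist {X : Type} [PseudoMetricSpace X] {A B : Set X} (hA : A.Nonempty)
    (hB : B.Nonempty) {d : ℝ} (h : ∀ a ∈ A, ∀ b ∈ B, d ≤ dist a b) : d ≤ setDist A B := by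
  apply le_csInf (hA.image2 hB)
  rintro x ⟨a, ha, b, hb, rfl⟩
  exact h a ha b hb

namespace GIFS

variable {m : ℕ} {V E : Type} [Fintype V] [Fintype E] (G : GIFS m V E)

/-- Start vertex of a path, with default. -/
def pathSrc (v : V) (p : List E) : V := (p.head?.map G.src).getD v

@[simp] lemma pathSrc_nil (v : V) : G.pathSrc v ([] : List E) = v := rfl

@[simp] lemma pathSrc_cons (v : V) (e : E) (p : List E) :
    G.pathSrc v (e :: p) = G.src e := rfl

lemma pathSrc_eq {p : List E} {w : V} (h : p.head?.map G.src = some w) (v : V) :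
    G.pathSrc v p = w := by simp [pathSrc, h]

lemma pathSrc_append {p : List E} (hp : p ≠ []) (v : V) (q : List E) :
    G.pathSrc v (p ++ q) = G.pathSrc v p := by
  cases p with
  | nil => exact absurd rfl hp
  | cons a p' => rfl

@[simp] lemma pathDst_nil (v : V) : G.pathDst v ([] : List E) = v := rfl

lemma pathDst_eq {p : List E} {w : V} (h : p.getLast?.map G.dst = some w) (v : V) :
    G.pathDst v p = w := by simp [pathDst, h]

lemma pathDst_cons (v : V) (e : E) (p : List E) :
    G.pathDst v (e :: p) = G.pathDst (G.dst e) p := by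
  cases p with
  | nil => rfl
  | cons f q =>
    have h : (f :: q).getLast? = some ((f :: q).getLast (by simp)) :=
      List.getLast?_eq_getLast_of_ne_nil (by simp)
    simp [pathDst, List.getLast?_cons_cons, h]

lemma pathDst_append (v : V) (p q : List E) :
    G.pathDst v (p ++ q) = G.pathDst (G.pathDst v p) q := by
  induction p generalizing v with
  | nil => simp
  | cons a p' ih => rw [List.cons_append, pathDst_cons, pathDst_cons, ih]

lemma pathDst_of_ne_nil {p : List E} (hp : p ≠ []) (v v' : V) :
    G.pathDst v p = G.pathDst v' p := by
  unfold pathDst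
  rw [List.getLast?_eq_getLast_of_ne_nil hp]
  simp

@[simp] lemma pathRatio_nil : G.pathRatio ([] : List E) = 1 := by simp [pathRatio]

@[simp] lemma pathRatio_cons (e : E) (p : List E) :
    G.pathRatio (e :: p) = G.ratio e * G.pathRatio p := by simp [pathRatio]

lemma pathRatio_append (p q : List E) :
    G.pathRatio (p ++ q) = G.pathRatio p * G.pathRatio q := by simp [pathRatio]

lemma pathRatio_pos (p : List E) : 0 < G.pathRatio p := by
  induction p with
  | nil => simp
  | cons e q ih => rw [pathRatio_cons]; exact mul_pos (G.ratio_pos e) ih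

lemma pathRatio_le_one (p : List E) : G.pathRatio p ≤ 1 := by
  induction p with
  | nil => simp
  | cons e q ih =>
    rw [pathRatio_cons]
    nlinarith [G.ratio_pos e, G.ratio_lt_one e, G.pathRatio_pos q]

lemma pathRatio_lt_one {p : List E} (hp : p ≠ []) : G.pathRatio p < 1 := by
  cases p with
  | nil => exact absurd rfl hp
  | cons e q =>
    rw [pathRatio_cons]
    nlinarith [G.ratio_pos e, G.ratio_lt_one e, G.pathRatio_pos q, G.pathRatio_le_one q]

@[simp] lemma pathMap_nil : G.pathMap ([] : List E) = id := rfl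

@[simp] lemma pathMap_cons (e : E) (p : List E) (x : Euc m) :
    G.pathMap (e :: p) x = G.map e (G.pathMap p x) := rfl

lemma pathMap_append (p q : List E) (x : Euc m) :
    G.pathMap (p ++ q) x = G.pathMap p (G.pathMap q x) := by
  induction p with
  | nil => rfl
  | cons a p' ih => simp only [List.cons_append, pathMap_cons, ih]

lemma pathMap_dist (p : List E) (x y : Euc m) :
    dist (G.pathMap p x) (G.pathMap p y) = G.pathRatio p * dist x y := by
  induction p with
  | nil => simp
  | cons e q ih =>
    rw [pathMap_cons, pathMap_cons, G.map_similarity, ih, pathRatio_cons, mul_assoc]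

lemma map_continuous (e : E) : Continuous (G.map e) := by
  have h : LipschitzWith (G.ratio e).toNNReal (G.map e) :=
    LipschitzWith.of_dist_le_mul fun x y => by
      rw [G.map_similarity, Real.coe_toNNReal _ (G.ratio_pos e).le]
  exact h.continuous

lemma isPath_cons {e : E} {p : List E} (h : G.IsPath (e :: p)) :
    G.IsPath p ∧ G.pathSrc (G.dst e) p = G.dst e := by
  rw [IsPath, List.Chain', List.isChain_cons] at h
  refine ⟨h.2, ?_⟩
  cases p with
  | nil => rfl
  | cons f q =>
    rw [pathSrc_cons]
    exact (h.1 f rfl).symm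

lemma isPath_append {p q : List E} (h : G.IsPath (p ++ q)) :
    G.IsPath p ∧ G.IsPath q ∧
      (q ≠ [] → ∀ v, G.pathDst (G.pathSrc v q) p = G.pathSrc v q) := by
  rw [IsPath, List.Chain', List.isChain_append] at h
  refine ⟨h.1, h.2.1, ?_⟩
  intro hq v
  cases q with
  | nil => exact absurd rfl hq
  | cons f q' =>
    rw [pathSrc_cons]
    cases p with
    | nil => rfl
    | cons a p' =>
      have hlast : (a :: p').getLast? = some ((a :: p').getLast (by simp)) :=
        List.getLast?_eq_getLast_of_ne_nil (by simp)
      have hjun := h.2.2 ((a :: p').getLast (by simp)) hlast f rfl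
      have hfinal : (a :: p').getLast?.map G.dst = some (G.src f) := by
        rw [hlast, Option.map_some, hjun]
      exact G.pathDst_eq hfinal _

lemma image_F_subset {F : V → Set (Euc m)} (hF : G.IsAttractor F) :
    ∀ (p : List E) (v : V), G.IsPath p → G.pathSrc v p = v →
      G.pathMap p '' F (G.pathDst v p) ⊆ F v := by
  intro p
  induction p with
  | nil => intro v _ _; simp
  | cons e q ih =>
    intro v hp hsrc
    obtain ⟨hq, hq2⟩ := G.isPath_cons hp
    have hv : G.src e = v := hsrc
    have himg : G.pathMap (e :: q) '' F (G.pathDst v (e :: q)) =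
        G.map e '' (G.pathMap q '' F (G.pathDst (G.dst e) q)) := by
      rw [G.pathDst_cons, ← Set.image_comp]
      rfl
    rw [himg]
    refine subset_trans (Set.image_mono (ih (G.dst e) hq hq2)) ?_
    rw [hF.2.2 v]
    exact Set.subset_biUnion_of_mem (u := fun e => G.map e '' F (G.dst e))
      (show e ∈ {f : E | G.src f = v} from hv)

lemma image_U_subset {U : V → Set (Euc m)} (hU : G.OSCWith U) :
    ∀ (p : List E) (v : V), G.IsPath p → G.pathSrc v p = v →
      G.pathMap p '' U (G.pathDst v p) ⊆ U v := by
  intro p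
  induction p with
  | nil => intro v _ _; simp
  | cons e q ih =>
    intro v hp hsrc
    obtain ⟨hq, hq2⟩ := G.isPath_cons hp
    have hv : G.src e = v := hsrc
    have himg : G.pathMap (e :: q) '' U (G.pathDst v (e :: q)) =
        G.map e '' (G.pathMap q '' U (G.pathDst (G.dst e) q)) := by
      rw [G.pathDst_cons, ← Set.image_comp]
      rfl
    rw [himg]
    refine subset_trans (Set.image_mono (ih (G.dst e) hq hq2)) ?_
    rw [← hv]
    exact hU.2.1 e

lemma F_subset_closureU [Nonempty V] {F U : V → Set (Euc m)} (hF : G.IsAttractor F)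
    (hU : G.OSCWith U) : ∀ v, F v ⊆ closure (U v) := by
  obtain ⟨e0, -, -, -⟩ := G.two_edges (Classical.arbitrary V)
  haveI : Nonempty E := ⟨e0⟩
  set ρ : ℝ := Finset.univ.sup' Finset.univ_nonempty G.ratio with hρdef
  have hρ1 : ∀ e : E, G.ratio e ≤ ρ := fun e => Finset.le_sup' _ (Finset.mem_univ e)
  have hρpos : 0 < ρ := lt_of_lt_of_le (G.ratio_pos e0) (hρ1 e0)
  have hρlt : ρ < 1 := (Finset.sup'_lt_iff Finset.univ_nonempty).mpr fun e _ => G.ratio_lt_one e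
  choose y hy using fun v => (hU.1 v).1
  choose R hR using fun v => ((hF.2.1 v).isBounded.subset_closedBall (y v))
  set C : ℝ := Finset.univ.sup' Finset.univ_nonempty R with hCdef
  have hC : ∀ v, ∀ x ∈ F v, dist x (y v) ≤ C := fun v x hx =>
    le_trans (Metric.mem_closedBall.mp (hR v hx)) (Finset.le_sup' _ (Finset.mem_univ v))
  have hC0 : 0 ≤ C := by
    obtain ⟨x0, hx0⟩ := hF.1 (Classical.arbitrary V)
    exact le_trans dist_nonneg (hC _ _ hx0)
  have claim : ∀ (n : ℕ) (v : V), ∀ x ∈ F v, ∃ z ∈ closure (U v), dist x z ≤ ρ ^ n * C := by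
    intro n
    induction n with
    | zero =>
      intro v x hx
      exact ⟨y v, subset_closure (hy v), by simpa using hC v x hx⟩
    | succ n ih =>
      intro v x hx
      rw [hF.2.2 v] at hx
      simp only [Set.mem_iUnion, Set.mem_image, Set.mem_setOf_eq] at hx
      obtain ⟨e, hev, w, hw, rfl⟩ := hx
      obtain ⟨z', hz', hd⟩ := ih (G.dst e) w hw
      refine ⟨G.map e z', ?_, ?_⟩
      · have h1 : G.map e z' ∈ G.map e '' closure (U (G.dst e)) := ⟨z', hz', rfl⟩
        have h2 := image_closure_subset_closure_image (G.map_continuous e) h1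
        refine closure_mono ?_ h2
        rw [← hev]
        exact hU.2.1 e
      · rw [G.map_similarity]
        calc G.ratio e * dist w z' ≤ ρ * (ρ ^ n * C) := by
              apply mul_le_mul (hρ1 e) hd dist_nonneg hρpos.le
          _ = ρ ^ (n + 1) * C := by ring
  intro v x hx
  rw [← closure_closure (s := U v), Metric.mem_closure_iff]
  intro ε hε
  obtain ⟨n, hn⟩ := exists_pow_lt_of_lt_one (show (0:ℝ) < ε / (C + 1) by positivity) hρlt
  obtain ⟨z, hz, hdz⟩ := claim n v x hx
  refine ⟨z, hz, lt_of_le_of_lt hdz ?_⟩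
  have h2 : ρ ^ n * (C + 1) < ε := (lt_div_iff₀ (by positivity)).mp hn
  nlinarith [pow_pos hρpos n]

end GIFS

end Aux

/-- **Lemma 4.6.** Suppose the OSC holds with open sets `(U_v)`, fix paths `(l_v)` of
common length `l` with `S_{l_v}(F_{t(l_v)}) ⊆ U_v`, and let
`c_v = dist(S_{l_v}(F_{t(l_v)}), ℝ^m ∖ U_v) > 0`. If `e` and `g` are finite paths starting
at `u` whose first edges differ and
`dist(S_e(F_{t(e)}), S_g(F_{t(g)})) ≤ c_w · r_g` for some vertex `w`, then `l_w` is not a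
subpath of `g₂⋯g_j` (the path `g` with its first edge removed). -/
theorem statement19
    {m : ℕ} (hm : 1 ≤ m) {V E : Type} [Fintype V] [Fintype E]
    (G : GIFS m V E)
    (F : V → Set (Euc m)) (hF : G.IsAttractor F)
    (U : V → Set (Euc m)) (hU : G.OSCWith U)
    (l : ℕ) (hl : 0 < l) (lu : V → List E)
    (hlu : ∀ u : V, ∃ v : V, G.IsPathFrom u v (lu u) ∧ (lu u).length = l ∧
      G.pathMap (lu u) '' F v ⊆ U u)
    (c : V → ℝ)
    (hc : ∀ v : V, c v = setDist (G.pathMap (lu v) '' F (G.pathDst v (lu v))) ((U v)ᶜ))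
    (hcpos : ∀ v : V, 0 < c v)
    (u ve vg w₀ : V) (e g : List E)
    (he : G.IsPathFrom u ve e) (hg : G.IsPathFrom u vg g)
    (hhead : e.head? ≠ g.head?)
    (hdist : setDist (G.pathMap e '' F ve) (G.pathMap g '' F vg) ≤ c w₀ * G.pathRatio g) :
    ¬ IsSubpath (lu w₀) g.tail := by
  rintro ⟨s, t, hst⟩
  haveI : Nonempty V := ⟨u⟩
  obtain ⟨v₁, hL, hLlen, hLU⟩ := hlu w₀
  have hLne : lu w₀ ≠ [] := hL.1
  obtain ⟨g₁, gt, rfl⟩ : ∃ g₁ gt, g = g₁ :: gt := by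
    cases g with
    | nil => exact absurd rfl hg.1
    | cons a b => exact ⟨a, b, rfl⟩
  obtain ⟨e₁, et, rfl⟩ : ∃ e₁ et, e = e₁ :: et := by
    cases e with
    | nil => exact absurd rfl he.1
    | cons a b => exact ⟨a, b, rfl⟩
  simp only [List.tail_cons] at hst
  rw [List.append_assoc] at hst
  subst hst
  have he₁g₁ : e₁ ≠ g₁ := fun h => hhead (by simp [h])
  have hsrcg₁ : G.src g₁ = u := by simpa using hg.2.2.1
  have hsrce₁ : G.src e₁ = u := by simpa using he.2.2.1
  -- decompose the chain of g
  obtain ⟨hX, hXsrc⟩ := G.isPath_cons hg.2.1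
  obtain ⟨hs, hLT, hjs⟩ := G.isPath_append (p := s) (q := lu w₀ ++ t) hX
  obtain ⟨hLp, ht, hjL⟩ := G.isPath_append (p := lu w₀) (q := t) hLT
  have hLTne : lu w₀ ++ t ≠ [] := by
    intro h
    exact hLne (List.append_eq_nil_iff.mp h).1
  have hSrcLT : ∀ v, G.pathSrc v (lu w₀ ++ t) = w₀ := fun v => by
    rw [G.pathSrc_append hLne, G.pathSrc_eq hL.2.2.1]
  have hDstL : ∀ v, G.pathDst v (lu w₀) = v₁ := fun v => G.pathDst_eq hL.2.2.2 v
  have hdstg : G.pathDst (G.dst g₁) (s ++ (lu w₀ ++ t)) = vg := by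
    have h1 : G.pathDst u (g₁ :: (s ++ (lu w₀ ++ t))) = vg := G.pathDst_eq hg.2.2.2 u
    rwa [G.pathDst_cons] at h1
  have hsw : G.pathDst (G.dst g₁) s = w₀ := by
    cases s with
    | nil =>
      have := hXsrc
      rw [show ([] : List E) ++ (lu w₀ ++ t) = lu w₀ ++ t from rfl, hSrcLT] at this
      simpa using this.symm
    | cons a s' =>
      have h1 := hjs hLTne (G.dst g₁)
      rw [hSrcLT] at h1
      rw [G.pathDst_of_ne_nil (by simp) (G.dst g₁) w₀]
      exact h1
  have hv₁t : G.pathDst v₁ t = vg := by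
    have h1 : G.pathDst (G.pathDst (G.pathDst (G.dst g₁) s) (lu w₀)) t = vg := by
      rw [← G.pathDst_append, ← G.pathDst_append]
      exact hdstg
    rwa [hDstL] at h1
  have hsrct : G.pathSrc v₁ t = v₁ := by
    cases t with
    | nil => rfl
    | cons a t' =>
      have h1 := hjL (by simp) v₁
      rw [hDstL] at h1
      exact h1.symm
  have hssrc : G.pathSrc (G.dst g₁) s = G.dst g₁ := by
    cases s with
    | nil => rfl
    | cons a s' =>
      have := hXsrc
      rwa [G.pathSrc_append (by simp)] at this
  -- e-side
  obtain ⟨hetPath, hetsrc⟩ := G.isPath_cons he.2.1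
  have hdste : G.pathDst (G.dst e₁) et = ve := by
    have h1 : G.pathDst u (e₁ :: et) = ve := G.pathDst_eq he.2.2.2 u
    rwa [G.pathDst_cons] at h1
  -- distance from the inner set to the complement of U w₀
  have hcw : ∀ z ∈ G.pathMap (lu w₀) '' F v₁, ∀ q, q ∉ U w₀ → c w₀ ≤ dist z q := by
    intro z hz q hq
    rw [hc w₀, hDstL]
    exact setDist_le_dist hz hq
  have hApath : G.IsPath (g₁ :: s) := by
    rw [GIFS.IsPath, List.Chain', List.isChain_cons]
    refine ⟨?_, hs⟩
    intro y hy
    cases s with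
    | nil => simp at hy
    | cons a s' =>
      have hya : a = y := by simpa using hy
      subst hya
      exact hssrc.symm
  have hrApos := G.pathRatio_pos (g₁ :: s)
  -- W := pathMap (g₁::s) '' U w₀ ⊆ map g₁ '' U (dst g₁)
  have himgU : G.pathMap s '' U w₀ ⊆ U (G.dst g₁) := by
    have h1 := G.image_U_subset hU s (G.dst g₁) hs hssrc
    rwa [hsw] at h1
  have hW : G.pathMap (g₁ :: s) '' U w₀ ⊆ G.map g₁ '' U (G.dst g₁) := by
    rintro x ⟨z, hz, rfl⟩
    exact ⟨G.pathMap s z, himgU ⟨z, hz, rfl⟩, rfl⟩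
  have hFe : G.pathMap (e₁ :: et) '' F ve ⊆ G.map e₁ '' F (G.dst e₁) := by
    rintro x ⟨z, hz, rfl⟩
    refine ⟨G.pathMap et z, ?_, rfl⟩
    have h1 := G.image_F_subset hF et (G.dst e₁) hetPath hetsrc
    rw [hdste] at h1
    exact h1 ⟨z, hz, rfl⟩
  have hclosU := G.F_subset_closureU hF hU
  have hdisj : (G.map e₁ '' U (G.dst e₁)) ∩ (G.map g₁ '' U (G.dst g₁)) = ∅ :=
    hU.2.2 u e₁ g₁ hsrce₁ hsrcg₁ he₁g₁
  have hopen : IsOpen (G.map g₁ '' U (G.dst g₁)) :=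
    similarity_isOpenImage (G.ratio_pos g₁) (G.map_similarity g₁) (hU.1 _).2.1
  have hxnot : ∀ x ∈ G.pathMap (e₁ :: et) '' F ve, x ∉ G.map g₁ '' U (G.dst g₁) := by
    intro x hx hmem
    have hx1 : x ∈ closure (G.map e₁ '' U (G.dst e₁)) := by
      obtain ⟨z, hz, rfl⟩ := hFe hx
      have hz' : z ∈ closure (U (G.dst e₁)) := hclosU _ hz
      exact image_closure_subset_closure_image (G.map_continuous e₁) ⟨z, hz', rfl⟩
    obtain ⟨p, hp1, hp2⟩ := _root_.mem_closure_iff.mp hx1 _ hopen hmem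
    rw [Set.eq_empty_iff_forall_notMem] at hdisj
    exact hdisj p ⟨hp2, hp1⟩
  have hsurj : Function.Surjective (G.pathMap (g₁ :: s)) :=
    similarity_surjective hrApos (G.pathMap_dist (g₁ :: s))
  -- the key lower bound for the set distance
  have hkey : G.pathRatio (g₁ :: s) * c w₀ ≤
      setDist (G.pathMap (e₁ :: et) '' F ve)
        (G.pathMap (g₁ :: (s ++ (lu w₀ ++ t))) '' F vg) := by
    apply le_setDist ((hF.1 ve).image _) ((hF.1 vg).image _)
    intro x hx y hy
    obtain ⟨z0, hz0, rfl⟩ := hy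
    have hyA : G.pathMap (g₁ :: (s ++ (lu w₀ ++ t))) z0 =
        G.pathMap (g₁ :: s) (G.pathMap (lu w₀) (G.pathMap t z0)) := by
      rw [show g₁ :: (s ++ (lu w₀ ++ t)) = (g₁ :: s) ++ (lu w₀ ++ t) from rfl,
        G.pathMap_append, G.pathMap_append]
    have hzU : G.pathMap (lu w₀) (G.pathMap t z0) ∈ G.pathMap (lu w₀) '' F v₁ := by
      refine ⟨G.pathMap t z0, ?_, rfl⟩
      have h1 := G.image_F_subset hF t v₁ ht hsrct
      rw [hv₁t] at h1
      exact h1 ⟨z0, hz0, rfl⟩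
    obtain ⟨x', rfl⟩ := hsurj x
    have hx'U : x' ∉ U w₀ := fun hx' => hxnot _ hx (hW ⟨x', hx', rfl⟩)
    rw [hyA, G.pathMap_dist]
    have hge : c w₀ ≤ dist x' (G.pathMap (lu w₀) (G.pathMap t z0)) := by
      rw [dist_comm]
      exact hcw _ hzU x' hx'U
    exact mul_le_mul_of_nonneg_left hge hrApos.le
  -- conclude by comparing ratios
  have hrg : G.pathRatio (g₁ :: (s ++ (lu w₀ ++ t))) =
      G.pathRatio (g₁ :: s) * (G.pathRatio (lu w₀) * G.pathRatio t) := by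
    rw [show g₁ :: (s ++ (lu w₀ ++ t)) = (g₁ :: s) ++ (lu w₀ ++ t) from rfl,
      G.pathRatio_append, G.pathRatio_append]
  rw [hrg] at hdist
  have hL1 : G.pathRatio (lu w₀) < 1 := G.pathRatio_lt_one hLne
  have ht1 : G.pathRatio t ≤ 1 := G.pathRatio_le_one t
  have htpos := G.pathRatio_pos t
  have hLpos := G.pathRatio_pos (lu w₀)
  have hcw₀ := hcpos w₀
  have hlt : G.pathRatio (lu w₀) * G.pathRatio t < 1 := by nlinarith
  nlinarith [le_trans hkey hdist, mul_pos hrApos hcw₀]
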